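/- Let u ∈ ℝ^H be nonzero, Δ = a·u + b with ⟨u,b⟩ = 0 and 1 + a > 0, and suppose ‖b‖₂ ≥ ρ‖Δ‖₂ for some ρ ∈ (0,1]. Let c = cos(u, u + Δ) and assume c > 0. Then ‖Δ‖₂/‖u‖₂ ≤ ((1+a)/ρ)·√(1/c² − 1). -/

import Mathlib

noncomputable def cosSim {H : ℕ} (x y : EuclideanSpace ℝ (Fin H)) : ℝ :=
  (inner ℝ x y : ℝ) / (‖x‖ * ‖y‖)

theorem relative_step_from_cosine {H : ℕ}
    (u b : EuclideanSpace ℝ (Fin H)) (a ρ : ℝ)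
    (hu : u ≠ 0) (hab : (1 : ℝ) + a > 0)
    (horth : (inner ℝ u b : ℝ) = 0)
    (hρ : 0 < ρ) (hρ1 : ρ ≤ 1)
    (Δ : EuclideanSpace ℝ (Fin H)) (hΔ : Δ = a • u + b)
    (hperp : ‖b‖ ≥ ρ * ‖Δ‖)
    (hc : cosSim u (u + Δ) > 0) :
    ‖Δ‖ / ‖u‖ ≤ ((1 + a) / ρ) *
      Real.sqrt (1 / (cosSim u (u + Δ)) ^ 2 - 1) := by
  have hu0 : (0:ℝ) < ‖u‖ := norm_pos_iff.mpr hu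
  have hinner : (inner ℝ u (u + Δ) : ℝ) = (1 + a) * ‖u‖ ^ 2 := by
    rw [hΔ, inner_add_right, inner_add_right, real_inner_smul_right, horth,
      real_inner_self_eq_norm_sq]
    ring
  have hob : (inner ℝ ((1+a) • u) b : ℝ) = 0 := by
    rw [real_inner_smul_left, horth]; ring
  have huΔ : u + Δ = (1+a) • u + b := by
    rw [hΔ]; module
  have hnorm2 : ‖u + Δ‖ ^ 2 = (1+a)^2 * ‖u‖^2 + ‖b‖^2 := by
    rw [huΔ, norm_add_sq_real, hob, norm_smul, Real.norm_eq_abs, abs_of_pos hab]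
    ring
  have hv0 : (0:ℝ) < ‖u + Δ‖ := by
    rcases (norm_nonneg (u + Δ)).lt_or_eq with h | h
    · exact h
    · exfalso
      rw [cosSim, ← h] at hc
      simp at hc
  have hc_eq : cosSim u (u + Δ) = (1+a) * ‖u‖ / ‖u + Δ‖ := by
    rw [cosSim, hinner]
    field_simp
  have hkey : 1 / (cosSim u (u+Δ))^2 - 1 = ‖b‖^2 / ((1+a)^2 * ‖u‖^2) := by
    rw [hc_eq]
    field_simp
    nlinarith [hnorm2]
  have hsq : ‖b‖^2 / ((1+a)^2 * ‖u‖^2) = (‖b‖ / ((1+a) * ‖u‖))^2 := by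
    rw [div_pow, mul_pow]
  have hsqrt : Real.sqrt (1/(cosSim u (u+Δ))^2 - 1) = ‖b‖ / ((1+a) * ‖u‖) := by
    rw [hkey, hsq, Real.sqrt_sq (by positivity)]
  have heq : ((1+a)/ρ) * (‖b‖ / ((1+a) * ‖u‖)) = ‖b‖ / (ρ * ‖u‖) := by
    field_simp
  rw [hsqrt, heq, div_le_div_iff₀ hu0 (by positivity)]
  nlinarith [hperp, norm_nonneg Δ]
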